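/- (Miquel's theorem, planar version) Let A, B, C be affinely independent points in EuclideanSpace ℝ (Fin 2), and let A' be a point on the line through B and C, B' a point on the line through C and A, and C' a point on the line through A and B, such that each of the triples (A, B', C'), (B, C', A'), (C, A', B') is affinely independent. Then the circumcircles of the three triangles A B' C', B C' A', C A' B' have a common point: there exists a point M lying on all three circumcircles. -/

import Mathlib

open EuclideanGeometry Affine Real

local notation "V" => EuclideanSpace ℝ (Fin 2)

/-- Miquel's theorem, planar version: the circumcircles of the triangles
`A B' C'`, `B C' A'`, `C A' B'` have a common point. -/
theorem miquel_planar
    (A B C A' B' C' : EuclideanSpace ℝ (Fin 2))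
    (hABC : AffineIndependent ℝ ![A, B, C])
    (hA' : A' ∈ affineSpan ℝ ({B, C} : Set (EuclideanSpace ℝ (Fin 2))))
    (hB' : B' ∈ affineSpan ℝ ({C, A} : Set (EuclideanSpace ℝ (Fin 2))))
    (hC' : C' ∈ affineSpan ℝ ({A, B} : Set (EuclideanSpace ℝ (Fin 2))))
    (h₁ : AffineIndependent ℝ ![A, B', C'])
    (h₂ : AffineIndependent ℝ ![B, C', A'])
    (h₃ : AffineIndependent ℝ ![C, A', B']) :
    ∃ M : EuclideanSpace ℝ (Fin 2),
      dist M (Simplex.circumcenter ⟨![A, B', C'], h₁⟩) =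
          Simplex.circumradius (⟨![A, B', C'], h₁⟩ : Simplex ℝ (EuclideanSpace ℝ (Fin 2)) 2) ∧
      dist M (Simplex.circumcenter ⟨![B, C', A'], h₂⟩) =
          Simplex.circumradius (⟨![B, C', A'], h₂⟩ : Simplex ℝ (EuclideanSpace ℝ (Fin 2)) 2) ∧
      dist M (Simplex.circumcenter ⟨![C, A', B'], h₃⟩) =
          Simplex.circumradius (⟨![C, A', B'], h₃⟩ : Simplex ℝ (EuclideanSpace ℝ (Fin 2)) 2) := by
  haveI : Fact (Module.finrank ℝ (EuclideanSpace ℝ (Fin 2)) = 2) :=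
    ⟨finrank_euclideanSpace_fin⟩
  haveI : Module.Oriented ℝ (EuclideanSpace ℝ (Fin 2)) (Fin 2) :=
    ⟨Module.Basis.orientation (EuclideanSpace.basisFun (Fin 2) ℝ).toBasis⟩
  let T₁ : Triangle ℝ V := ⟨![A, B', C'], h₁⟩
  let T₂ : Triangle ℝ V := ⟨![B, C', A'], h₂⟩
  let T₃ : Triangle ℝ V := ⟨![C, A', B'], h₃⟩
  -- distinctness
  have hAB : A ≠ B := by simpa using hABC.injective.ne (show (0 : Fin 3) ≠ 1 by decide)
  have hAC : A ≠ C := by simpa using hABC.injective.ne (show (0 : Fin 3) ≠ 2 by decide)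
  have hBC : B ≠ C := by simpa using hABC.injective.ne (show (1 : Fin 3) ≠ 2 by decide)
  have hAB' : A ≠ B' := by simpa using h₁.injective.ne (show (0 : Fin 3) ≠ 1 by decide)
  have hAC' : A ≠ C' := by simpa using h₁.injective.ne (show (0 : Fin 3) ≠ 2 by decide)
  have hB'C' : B' ≠ C' := by simpa using h₁.injective.ne (show (1 : Fin 3) ≠ 2 by decide)
  have hBC' : B ≠ C' := by simpa using h₂.injective.ne (show (0 : Fin 3) ≠ 1 by decide)
  have hBA' : B ≠ A' := by simpa using h₂.injective.ne (show (0 : Fin 3) ≠ 2 by decide)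
  have hC'A' : C' ≠ A' := by simpa using h₂.injective.ne (show (1 : Fin 3) ≠ 2 by decide)
  have hCA' : C ≠ A' := by simpa using h₃.injective.ne (show (0 : Fin 3) ≠ 1 by decide)
  have hCB' : C ≠ B' := by simpa using h₃.injective.ne (show (0 : Fin 3) ≠ 2 by decide)
  -- collinearity facts
  have cA' : Collinear ℝ ({A', B, C} : Set V) := collinear_insert_of_mem_affineSpan_pair hA'
  have cB' : Collinear ℝ ({B', C, A} : Set V) := collinear_insert_of_mem_affineSpan_pair hB'
  have cC' : Collinear ℝ ({C', A, B} : Set V) := collinear_insert_of_mem_affineSpan_pair hC'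
  -- the key angle identity
  have key : (2 : ℤ) • ∡ B' A C' + (2 : ℤ) • ∡ C' B A' = (2 : ℤ) • ∡ B' C A' := by
    have e1 : (2 : ℤ) • ∡ B' A C' = (2 : ℤ) • ∡ C A B := by
      rw [(cB'.subset (by intro p hp; simp at hp ⊢; tauto) :
            Collinear ℝ ({B', A, C} : Set V)).two_zsmul_oangle_eq_left hAB'.symm hAC.symm,
        cC'.two_zsmul_oangle_eq_right hAC'.symm hAB.symm]
    have e2 : (2 : ℤ) • ∡ C' B A' = (2 : ℤ) • ∡ A B C := by
      rw [(cC'.subset (by intro p hp; simp at hp ⊢; tauto) :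
            Collinear ℝ ({C', B, A} : Set V)).two_zsmul_oangle_eq_left hBC'.symm hAB,
        cA'.two_zsmul_oangle_eq_right hBA'.symm hBC.symm]
    have e3 : (2 : ℤ) • ∡ A C B = (2 : ℤ) • ∡ B' C A' := by
      rw [(cB'.subset (by intro p hp; simp at hp ⊢; tauto) :
            Collinear ℝ ({A, C, B'} : Set V)).two_zsmul_oangle_eq_left hAC hCB'.symm,
        (cA'.subset (by intro p hp; simp at hp ⊢; tauto) :
            Collinear ℝ ({B, C, A'} : Set V)).two_zsmul_oangle_eq_right hBC hCA'.symm]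
    have tsum : ∡ C A B + ∡ A B C + ∡ B C A = π :=
      EuclideanGeometry.oangle_add_oangle_add_oangle_eq_pi hAC hAB.symm hBC.symm
    have tsum' : ∡ C A B + ∡ A B C = (π : Real.Angle) - ∡ B C A := eq_sub_of_add_eq tsum
    rw [e1, e2, ← e3]
    calc (2 : ℤ) • ∡ C A B + (2 : ℤ) • ∡ A B C
        = (2 : ℤ) • (∡ C A B + ∡ A B C) := (smul_add _ _ _).symm
      _ = (2 : ℤ) • ((π : Real.Angle) - ∡ B C A) := by rw [tsum']
      _ = (2 : ℤ) • (π : Real.Angle) - (2 : ℤ) • ∡ B C A := smul_sub _ _ _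
      _ = -((2 : ℤ) • ∡ B C A) := by rw [Real.Angle.two_zsmul_coe_pi, zero_sub]
      _ = (2 : ℤ) • ∡ A C B := by rw [EuclideanGeometry.oangle_rev B C A, smul_neg]
  -- circumcenters and the second intersection point
  set O₁ : V := T₁.circumcenter with hO₁def
  set O₂ : V := T₂.circumcenter with hO₂def
  set ℓ : AffineSubspace ℝ V := affineSpan ℝ ({O₁, O₂} : Set V) with hℓdef
  haveI : Nonempty ℓ := ⟨⟨O₁, left_mem_affineSpan_pair ℝ O₁ O₂⟩⟩
  set M : V := EuclideanGeometry.reflection ℓ C' with hMdef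
  have hp10 : T₁.points 0 = A := rfl
  have hp11 : T₁.points 1 = B' := rfl
  have hp12 : T₁.points 2 = C' := rfl
  have hp20 : T₂.points 0 = B := rfl
  have hp21 : T₂.points 1 = C' := rfl
  have hp22 : T₂.points 2 = A' := rfl
  have hp30 : T₃.points 0 = C := rfl
  have hp31 : T₃.points 1 = A' := rfl
  have hp32 : T₃.points 2 = B' := rfl
  have hM1 : dist M T₁.circumcenter = T₁.circumradius := by
    rw [dist_comm, ← hO₁def]
    calc dist O₁ M = dist O₁ C' :=
          EuclideanGeometry.dist_reflection_eq_of_mem ℓ (left_mem_affineSpan_pair ℝ O₁ O₂) C'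
      _ = T₁.circumradius := by
          rw [dist_comm, hO₁def, ← hp12]; exact T₁.dist_circumcenter_eq_circumradius 2
  have hM2 : dist M T₂.circumcenter = T₂.circumradius := by
    rw [dist_comm, ← hO₂def]
    calc dist O₂ M = dist O₂ C' :=
          EuclideanGeometry.dist_reflection_eq_of_mem ℓ (right_mem_affineSpan_pair ℝ O₁ O₂) C'
      _ = T₂.circumradius := by
          rw [dist_comm, hO₂def, ← hp21]; exact T₂.dist_circumcenter_eq_circumradius 1
  -- nondegeneracy of centers
  have hO₁C' : O₁ ≠ C' := by
    intro he
    apply hAC'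
    have hr : T₁.circumradius = 0 := by
      rw [← T₁.dist_circumcenter_eq_circumradius 2, hp12, ← hO₁def, he, dist_self]
    have h0 : dist A O₁ = 0 := by
      rw [hO₁def, ← hp10, T₁.dist_circumcenter_eq_circumradius 0, hr]
    rw [he] at h0
    exact dist_eq_zero.1 h0
  have hO₂C' : O₂ ≠ C' := by
    intro he
    apply hBC'
    have hr : T₂.circumradius = 0 := by
      rw [← T₂.dist_circumcenter_eq_circumradius 1, hp21, ← hO₂def, he, dist_self]
    have h0 : dist B O₂ = 0 := by
      rw [hO₂def, ← hp20, T₂.dist_circumcenter_eq_circumradius 0, hr]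
    rw [he] at h0
    exact dist_eq_zero.1 h0
  -- main goal reduces to membership in the third circumsphere
  suffices hM3 : dist M T₃.circumcenter = T₃.circumradius by exact ⟨M, hM1, hM2, hM3⟩
  -- easy degenerate cases
  by_cases hMA' : M = A'
  · rw [hMA', ← hp31]; exact T₃.dist_circumcenter_eq_circumradius 1
  by_cases hMB' : M = B'
  · rw [hMB', ← hp32]; exact T₃.dist_circumcenter_eq_circumradius 2
  by_cases hMC' : M = C'
  · -- tangent case: C' lies on the line of the centers
    have hmem : C' ∈ ℓ := (EuclideanGeometry.reflection_eq_self_iff C').1 hMC'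
    have cO : Collinear ℝ ({C', O₁, O₂} : Set V) := collinear_insert_of_mem_affineSpan_pair hmem
    have a1 : (2 : ℤ) • ∡ B' C' O₁ = (π : Real.Angle) + (2 : ℤ) • ∡ B' A C' := by
      have h := EuclideanGeometry.Sphere.two_zsmul_oangle_center_add_two_zsmul_oangle_eq_pi
        (s := T₁.circumsphere) (p₁ := C') (p₂ := A) (p₃ := B')
        (hp12 ▸ T₁.mem_circumsphere 2) (hp10 ▸ T₁.mem_circumsphere 0)
        (hp11 ▸ T₁.mem_circumsphere 1) hAC' hAB' hB'C'.symm
      have h' : (2 : ℤ) • ∡ B' C' O₁ = (π : Real.Angle) - (2 : ℤ) • ∡ C' A B' :=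
        eq_sub_of_add_eq h
      rw [h', EuclideanGeometry.oangle_rev B' A C', smul_neg, sub_neg_eq_add, add_comm]
    have a3 : (2 : ℤ) • ∡ O₂ C' A' = (2 : ℤ) • ∡ C' B A' - (π : Real.Angle) := by
      have h := EuclideanGeometry.Sphere.two_zsmul_oangle_center_add_two_zsmul_oangle_eq_pi
        (s := T₂.circumsphere) (p₁ := C') (p₂ := B) (p₃ := A')
        (hp21 ▸ T₂.mem_circumsphere 1) (hp20 ▸ T₂.mem_circumsphere 0)
        (hp22 ▸ T₂.mem_circumsphere 2) hBC' hBA' hC'A'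
      have h' : (2 : ℤ) • ∡ A' C' O₂ = (π : Real.Angle) - (2 : ℤ) • ∡ C' B A' :=
        eq_sub_of_add_eq h
      have h'' : (2 : ℤ) • ∡ O₂ C' A' = -((2 : ℤ) • ∡ A' C' O₂) := by
        rw [EuclideanGeometry.oangle_rev A' C' O₂, smul_neg]
      rw [h'', h', neg_sub]
    have a2 : (2 : ℤ) • ∡ O₁ C' A' = (2 : ℤ) • ∡ O₂ C' A' :=
      (cO.subset (by intro p hp; simp at hp ⊢; tauto) :
          Collinear ℝ ({O₁, C', O₂} : Set V)).two_zsmul_oangle_eq_left hO₁C' hO₂C'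
    have hadd : ∡ B' C' O₁ + ∡ O₁ C' A' = ∡ B' C' A' :=
      EuclideanGeometry.oangle_add hB'C' hO₁C' hC'A'.symm
    have comb : (2 : ℤ) • ∡ B' C' A' = (2 : ℤ) • ∡ B' C A' := by
      calc (2 : ℤ) • ∡ B' C' A'
          = (2 : ℤ) • ∡ B' C' O₁ + (2 : ℤ) • ∡ O₁ C' A' := by rw [← smul_add, hadd]
        _ = ((π : Real.Angle) + (2 : ℤ) • ∡ B' A C')
              + ((2 : ℤ) • ∡ C' B A' - (π : Real.Angle)) := by rw [a1, a2, a3]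
        _ = (2 : ℤ) • ∡ B' A C' + (2 : ℤ) • ∡ C' B A' := by abel
        _ = (2 : ℤ) • ∡ B' C A' := key
    have hmem3 : C' ∈ T₃.circumsphere := by
      refine Affine.Triangle.mem_circumsphere_of_two_zsmul_oangle_eq
        (t := T₃) (p := C') (i₁ := 2) (i₂ := 0) (i₃ := 1)
        (by decide) (by decide) (by decide) ?_
      rw [hp30, hp31, hp32]
      exact comb
    rw [hMC']
    exact hmem3
  · -- generic case: angle chase through M
    have hMs1 : M ∈ T₁.circumsphere := hM1
    have hMs2 : M ∈ T₂.circumsphere := hM2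
    have i1 : (2 : ℤ) • ∡ B' A C' = (2 : ℤ) • ∡ B' M C' :=
      EuclideanGeometry.Sphere.two_zsmul_oangle_eq
        (hp11 ▸ T₁.mem_circumsphere 1) (hp10 ▸ T₁.mem_circumsphere 0) hMs1
        (hp12 ▸ T₁.mem_circumsphere 2) hAB' hAC' hMB' hMC'
    have i2 : (2 : ℤ) • ∡ C' B A' = (2 : ℤ) • ∡ C' M A' :=
      EuclideanGeometry.Sphere.two_zsmul_oangle_eq
        (hp21 ▸ T₂.mem_circumsphere 1) (hp20 ▸ T₂.mem_circumsphere 0) hMs2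
        (hp22 ▸ T₂.mem_circumsphere 2) hBC' hBA' hMC' hMA'
    have hadd : ∡ B' M C' + ∡ C' M A' = ∡ B' M A' :=
      EuclideanGeometry.oangle_add (fun h => hMB' h.symm) (fun h => hMC' h.symm)
        (fun h => hMA' h.symm)
    have hang : (2 : ℤ) • ∡ B' M A' = (2 : ℤ) • ∡ B' C A' := by
      calc (2 : ℤ) • ∡ B' M A'
          = (2 : ℤ) • ∡ B' M C' + (2 : ℤ) • ∡ C' M A' := by rw [← smul_add, hadd]
        _ = (2 : ℤ) • ∡ B' A C' + (2 : ℤ) • ∡ C' B A' := by rw [← i1, ← i2]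
        _ = (2 : ℤ) • ∡ B' C A' := key
    have hmem3 : M ∈ T₃.circumsphere := by
      refine Affine.Triangle.mem_circumsphere_of_two_zsmul_oangle_eq
        (t := T₃) (p := M) (i₁ := 2) (i₂ := 0) (i₃ := 1)
        (by decide) (by decide) (by decide) ?_
      rw [hp30, hp31, hp32]
      exact hang
    exact hmem3
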